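/- If ρ and σ are density matrices on the same finite-dimensional space with ‖ρ - σ‖₁ ≤ ε, and λ^Λ denotes restriction to eigenvalues that are at least 1/Λ (with Λ > 0), then the sorted vectors of -log λ over these restricted spectra (padded consistently) satisfy ‖λ^Λ(-log ρ) - λ^Λ(-log σ)‖₁ ≤ Λ ε, using the Lipschitz constant Λ of the logarithm on [1/Λ, ∞). -/

import Mathlib

open scoped Matrix ComplexOrder

noncomputable section

namespace QI

def traceNorm {m : Type*} [Fintype m] [DecidableEq m] (A : Matrix m m ℂ) : ℝ :=
  ∑ i, Real.sqrt ((Matrix.isHermitian_mul_conjTranspose_self Aᴴ).eigenvalues i)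

def IsDensityMatrix {m : Type*} [Fintype m] [DecidableEq m] (ρ : Matrix m m ℂ) : Prop :=
  ρ.PosSemidef ∧ ρ.trace = 1

/-- The eigenvalues of a Hermitian matrix sorted in decreasing order. -/
def sortedEigsDesc {n : ℕ} {A : Matrix (Fin n) (Fin n) ℂ} (h : A.IsHermitian) : Fin n → ℝ :=
  fun i => h.eigenvalues (Tuple.sort h.eigenvalues i.rev)

end QI

open QI

namespace MirskyAux

open Matrix

variable {n : ℕ}

lemma sum_repr_sq (b : OrthonormalBasis (Fin n) ℂ (EuclideanSpace ℂ (Fin n)))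
    (x : EuclideanSpace ℂ (Fin n)) : ∑ j, ‖b.repr x j‖ ^ 2 = ‖x‖ ^ 2 := by
  rw [← b.repr.norm_map x, EuclideanSpace.norm_eq,
    Real.sq_sqrt (Finset.sum_nonneg fun i _ => sq_nonneg _)]

lemma inner_toEuclideanLin_nonneg {P : Matrix (Fin n) (Fin n) ℂ} (hP : P.PosSemidef)
    (x : EuclideanSpace ℂ (Fin n)) :
    0 ≤ RCLike.re (inner ℂ x (Matrix.toEuclideanLin P x) : ℂ) := by
  have h : (inner ℂ x (Matrix.toEuclideanLin P x) : ℂ) =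
      star (WithLp.equiv 2 (Fin n → ℂ) x) ⬝ᵥ (P *ᵥ (WithLp.equiv 2 (Fin n → ℂ) x)) := by
    rw [PiLp.inner_apply, Matrix.toEuclideanLin_apply, dotProduct]
    apply Finset.sum_congr rfl
    intro i _
    rw [RCLike.inner_apply']
    rfl
  rw [h]
  exact hP.re_dotProduct_nonneg _


lemma quadform {A : Matrix (Fin n) (Fin n) ℂ} (hA : A.IsHermitian)
    (x : EuclideanSpace ℂ (Fin n)) :
    RCLike.re (inner ℂ x (Matrix.toEuclideanLin A x) : ℂ) =
      ∑ j, hA.eigenvalues j * ‖hA.eigenvectorBasis.repr x j‖ ^ 2 := by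
  have hsym := (Matrix.isHermitian_iff_isSymmetric).mp hA
  set b := hA.eigenvectorBasis with hb
  have hLb : ∀ j, Matrix.toEuclideanLin A (b j) = (hA.eigenvalues j : ℂ) • b j := by
    intro j
    apply (WithLp.equiv 2 (Fin n → ℂ)).injective
    ext i
    have := congrFun (hA.mulVec_eigenvectorBasis j) i
    simpa [Matrix.toEuclideanLin_apply] using this
  have hrepr : ∀ j, b.repr (Matrix.toEuclideanLin A x) j =
      (hA.eigenvalues j : ℂ) * b.repr x j := by
    intro j
    rw [OrthonormalBasis.repr_apply_apply, OrthonormalBasis.repr_apply_apply,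
      ← hsym (b j) x, hLb j, inner_smul_left]
    simp
  have h1 : (inner ℂ x (Matrix.toEuclideanLin A x) : ℂ) =
      ∑ j, (starRingEnd ℂ) (b.repr x j) * b.repr (Matrix.toEuclideanLin A x) j := by
    rw [← b.repr.inner_map_map x (Matrix.toEuclideanLin A x)]
    rw [PiLp.inner_apply]
    simp_rw [RCLike.inner_apply']
  rw [h1]
  rw [map_sum]
  apply Finset.sum_congr rfl
  intro j _
  rw [hrepr j, mul_comm ((hA.eigenvalues j : ℂ)) (b.repr x j), ← mul_assoc,
    RCLike.conj_mul]
  simp [RCLike.mul_re, RCLike.ofReal_re, RCLike.ofReal_im, pow_two]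
  ring

lemma weyl_mono {A P : Matrix (Fin n) (Fin n) ℂ} (hA : A.IsHermitian) (hP : P.PosSemidef)
    (hAP : (A + P).IsHermitian) (k : Fin n) :
    sortedEigsDesc hA k ≤ sortedEigsDesc hAP k := by
  classical
  set b := hA.eigenvectorBasis with hbdef
  set c := hAP.eigenvectorBasis with hcdef
  set σp := Tuple.sort hA.eigenvalues with hσdef
  set τp := Tuple.sort hAP.eigenvalues with hτdef
  set I : Finset (Fin n) := (Finset.Ici k.rev).image σp with hIdef
  set J : Finset (Fin n) := (Finset.Iic k.rev).image τp with hJdef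
  have hkn : (k : ℕ) < n := k.2
  have hIcard : I.card = (k : ℕ) + 1 := by
    rw [hIdef, Finset.card_image_of_injective _ σp.injective, Fin.card_Ici, Fin.val_rev]
    omega
  have hJcard : J.card = n - (k : ℕ) := by
    rw [hJdef, Finset.card_image_of_injective _ τp.injective, Fin.card_Iic, Fin.val_rev]
    omega
  -- construct a nonzero vector in the intersection
  let e1 : EuclideanSpace ℂ (Fin n) ≃ₗ[ℂ] (Fin n → ℂ) := WithLp.linearEquiv 2 ℂ (Fin n → ℂ)
  let F1 : EuclideanSpace ℂ (Fin n) →ₗ[ℂ] ({ i // i ∈ Iᶜ } → ℂ) :=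
    (LinearMap.funLeft ℂ ℂ (fun i : {i // i ∈ Iᶜ} => (i : Fin n))).comp e1.toLinearMap
  let F2 : EuclideanSpace ℂ (Fin n) →ₗ[ℂ] ({ i // i ∈ Jᶜ } → ℂ) :=
    (LinearMap.funLeft ℂ ℂ (fun i : {i // i ∈ Jᶜ} => (i : Fin n))).comp
      (e1.toLinearMap.comp ((c.repr.toLinearEquiv.toLinearMap).comp
        b.repr.symm.toLinearEquiv.toLinearMap))
  let F := F1.prod F2
  have hexists : ∃ v : EuclideanSpace ℂ (Fin n), v ≠ 0 ∧ F v = 0 := by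
    by_contra hcon
    push_neg at hcon
    have hinj : Function.Injective F := by
      rw [← LinearMap.ker_eq_bot]
      rw [Submodule.eq_bot_iff]
      intro v hv
      by_contra hv0
      exact hv0 (hcon v (by simpa using hv0) |> absurd (LinearMap.mem_ker.mp hv) ∘ fun h => h)
    have hle := LinearMap.finrank_le_finrank_of_injective hinj
    rw [finrank_euclideanSpace, Fintype.card_fin, Module.finrank_prod,
      Module.finrank_pi, Module.finrank_pi, Fintype.card_coe, Fintype.card_coe,
      Finset.card_compl, Finset.card_compl, Fintype.card_fin, hIcard, hJcard] at hle
    omega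
  obtain ⟨v, hv0, hFv⟩ := hexists
  set x : EuclideanSpace ℂ (Fin n) := b.repr.symm v with hxdef
  have hbx : b.repr x = v := b.repr.apply_symm_apply v
  have hx0 : x ≠ 0 := fun h => hv0 (by rw [← hbx, h, map_zero])
  have hF1 : ∀ i ∉ I, b.repr x i = 0 := by
    intro i hi
    have := congrFun (congrArg Prod.fst hFv) ⟨i, Finset.mem_compl.mpr hi⟩
    simpa [F, F1, hbx, e1] using this
  have hF2 : ∀ j ∉ J, c.repr x j = 0 := by
    intro j hj
    have := congrFun (congrArg Prod.snd hFv) ⟨j, Finset.mem_compl.mpr hj⟩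
    simpa [F, F2, e1, hxdef] using this
  have hs1 : sortedEigsDesc hA k * ‖x‖ ^ 2 ≤
      RCLike.re (inner ℂ x (toEuclideanLin A x) : ℂ) := by
    rw [quadform hA x, ← sum_repr_sq b x, Finset.mul_sum]
    apply Finset.sum_le_sum
    intro i _
    by_cases hi : i ∈ I
    · rw [hIdef] at hi
      obtain ⟨j, hj, rfl⟩ := Finset.mem_image.mp hi
      have hmono := Tuple.monotone_sort hA.eigenvalues (Finset.mem_Ici.mp hj)
      exact mul_le_mul_of_nonneg_right hmono (sq_nonneg _)
    · rw [hF1 i hi]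
      simp
  have hs2 : RCLike.re (inner ℂ x (toEuclideanLin (A + P) x) : ℂ) ≤
      sortedEigsDesc hAP k * ‖x‖ ^ 2 := by
    rw [quadform hAP x, ← sum_repr_sq c x, Finset.mul_sum]
    apply Finset.sum_le_sum
    intro j _
    by_cases hj : j ∈ J
    · rw [hJdef] at hj
      obtain ⟨m, hm, rfl⟩ := Finset.mem_image.mp hj
      have hmono := Tuple.monotone_sort hAP.eigenvalues (Finset.mem_Iic.mp hm)
      exact mul_le_mul_of_nonneg_right hmono (sq_nonneg _)
    · rw [hF2 j hj]
      simp
  have hadd : RCLike.re (inner ℂ x (toEuclideanLin A x) : ℂ) ≤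
      RCLike.re (inner ℂ x (toEuclideanLin (A + P) x) : ℂ) := by
    have heq : toEuclideanLin (A + P) x = toEuclideanLin A x + toEuclideanLin P x := by
      rw [map_add]
      rfl
    rw [heq, inner_add_right, map_add]
    linarith [inner_toEuclideanLin_nonneg hP x]
  have hxpos : 0 < ‖x‖ ^ 2 := pow_pos (norm_pos_iff.mpr hx0) 2
  exact le_of_mul_le_mul_right (by linarith) hxpos

variable {n : ℕ}

lemma trace_conj_diag (U : Matrix.unitaryGroup (Fin n) ℂ) (d : Fin n → ℝ) :
    ((U : Matrix (Fin n) (Fin n) ℂ) * Matrix.diagonal (RCLike.ofReal ∘ d) *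
      (star U : Matrix (Fin n) (Fin n) ℂ)).trace = ∑ i, (d i : ℂ) := by
  rw [Matrix.trace_mul_cycle, Unitary.coe_star_mul_self, Matrix.one_mul, Matrix.trace_diagonal]
  rfl

lemma trace_eq_sum_eigs {A : Matrix (Fin n) (Fin n) ℂ} (hA : A.IsHermitian) :
    A.trace = ∑ i, (hA.eigenvalues i : ℂ) := by
  conv_lhs => rw [hA.spectral_theorem]
  exact trace_conj_diag _ _

lemma re_trace_eq_sum_eigs {A : Matrix (Fin n) (Fin n) ℂ} (hA : A.IsHermitian) :
    RCLike.re A.trace = ∑ i, hA.eigenvalues i := by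
  rw [trace_eq_sum_eigs hA]
  simp

lemma sum_sortedEigsDesc {A : Matrix (Fin n) (Fin n) ℂ} (hA : A.IsHermitian) :
    ∑ k, sortedEigsDesc hA k = RCLike.re A.trace := by
  rw [re_trace_eq_sum_eigs hA]
  exact Equiv.sum_comp ((Fin.revPerm).trans (Tuple.sort hA.eigenvalues)) hA.eigenvalues

lemma sortedEigsDesc_congr {A B : Matrix (Fin n) (Fin n) ℂ} (h : A = B)
    (hA : A.IsHermitian) (hB : B.IsHermitian) : sortedEigsDesc hA = sortedEigsDesc hB := by
  subst h; rfl

lemma conj_diag_posSemidef {A : Matrix (Fin n) (Fin n) ℂ} (hA : A.IsHermitian)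
    {d : Fin n → ℝ} (hd : ∀ i, 0 ≤ d i) :
    ((hA.eigenvectorUnitary : Matrix (Fin n) (Fin n) ℂ) * Matrix.diagonal (RCLike.ofReal ∘ d) *
      (star hA.eigenvectorUnitary : Matrix (Fin n) (Fin n) ℂ)).PosSemidef := by
  rw [Matrix.star_eq_conjTranspose]
  apply Matrix.PosSemidef.mul_mul_conjTranspose_same
  refine Matrix.posSemidef_diagonal_iff.mpr fun i => ?_
  rw [Function.comp_apply, RCLike.nonneg_iff]
  simp [hd i]

lemma conj_diag_mul {A : Matrix (Fin n) (Fin n) ℂ} (hA : A.IsHermitian) (d e : Fin n → ℝ) :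
    ((hA.eigenvectorUnitary : Matrix (Fin n) (Fin n) ℂ) * Matrix.diagonal (RCLike.ofReal ∘ d) *
      (star hA.eigenvectorUnitary : Matrix (Fin n) (Fin n) ℂ)) *
    ((hA.eigenvectorUnitary : Matrix (Fin n) (Fin n) ℂ) * Matrix.diagonal (RCLike.ofReal ∘ e) *
      (star hA.eigenvectorUnitary : Matrix (Fin n) (Fin n) ℂ)) =
    (hA.eigenvectorUnitary : Matrix (Fin n) (Fin n) ℂ) *
      Matrix.diagonal (RCLike.ofReal ∘ (d * e)) *
      (star hA.eigenvectorUnitary : Matrix (Fin n) (Fin n) ℂ) := by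
  have h1 : (star hA.eigenvectorUnitary : Matrix (Fin n) (Fin n) ℂ) *
      (hA.eigenvectorUnitary : Matrix (Fin n) (Fin n) ℂ) = 1 := Unitary.coe_star_mul_self _
  calc ((hA.eigenvectorUnitary : Matrix (Fin n) (Fin n) ℂ) * Matrix.diagonal (RCLike.ofReal ∘ d) *
      (star hA.eigenvectorUnitary : Matrix (Fin n) (Fin n) ℂ)) *
    ((hA.eigenvectorUnitary : Matrix (Fin n) (Fin n) ℂ) * Matrix.diagonal (RCLike.ofReal ∘ e) *
      (star hA.eigenvectorUnitary : Matrix (Fin n) (Fin n) ℂ))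
      = (hA.eigenvectorUnitary : Matrix (Fin n) (Fin n) ℂ) * (Matrix.diagonal (RCLike.ofReal ∘ d) *
        ((star hA.eigenvectorUnitary : Matrix (Fin n) (Fin n) ℂ) *
          (hA.eigenvectorUnitary : Matrix (Fin n) (Fin n) ℂ)) * Matrix.diagonal (RCLike.ofReal ∘ e)) *
      (star hA.eigenvectorUnitary : Matrix (Fin n) (Fin n) ℂ) := by
        simp only [Matrix.mul_assoc]
    _ = (hA.eigenvectorUnitary : Matrix (Fin n) (Fin n) ℂ) *
      Matrix.diagonal (RCLike.ofReal ∘ (d * e)) *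
      (star hA.eigenvectorUnitary : Matrix (Fin n) (Fin n) ℂ) := by
        rw [h1, Matrix.mul_one, Matrix.diagonal_mul_diagonal]
        have hde : (fun i => (RCLike.ofReal ∘ d) i * (RCLike.ofReal ∘ e) i) =
            (RCLike.ofReal ∘ (d * e) : Fin n → ℂ) := by
          funext i; simp
        rw [hde]

lemma traceNorm_hermitian {C : Matrix (Fin n) (Fin n) ℂ} (hC : C.IsHermitian) :
    traceNorm C = ∑ i, |hC.eigenvalues i| := by
  have hMpsd : (Cᴴ * (Cᴴ)ᴴ).PosSemidef := Matrix.posSemidef_self_mul_conjTranspose Cᴴ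
  set U := hC.eigenvectorUnitary with hU
  set absC := (U : Matrix (Fin n) (Fin n) ℂ) *
      Matrix.diagonal (RCLike.ofReal ∘ fun i => |hC.eigenvalues i|) *
      (star U : Matrix (Fin n) (Fin n) ℂ) with habsdef
  have habs_psd : absC.PosSemidef := conj_diag_posSemidef hC fun i => abs_nonneg _
  have habs2 : (fun i => |hC.eigenvalues i|) * (fun i => |hC.eigenvalues i|) =
      hC.eigenvalues * hC.eigenvalues := by
    funext i
    simp only [Pi.mul_apply]
    exact abs_mul_abs_self (hC.eigenvalues i)
  have hCC : Cᴴ * (Cᴴ)ᴴ = C * C := by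
    rw [Matrix.conjTranspose_conjTranspose, hC.eq]
  have hsq : absC ^ 2 = Cᴴ * (Cᴴ)ᴴ := by
    rw [pow_two, habsdef, conj_diag_mul, hCC, habs2]
    conv_rhs => rw [hC.spectral_theorem, Unitary.conjStarAlgAut_apply]
    rw [conj_diag_mul]
  set S := (hMpsd.1.eigenvectorUnitary : Matrix (Fin n) (Fin n) ℂ) *
      Matrix.diagonal (RCLike.ofReal ∘ (Real.sqrt ∘ hMpsd.1.eigenvalues)) *
      (star hMpsd.1.eigenvectorUnitary : Matrix (Fin n) (Fin n) ℂ) with hSdef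
  have hS_psd : S.PosSemidef := conj_diag_posSemidef hMpsd.1 fun i => Real.sqrt_nonneg _
  have hS2 : S * S = Cᴴ * (Cᴴ)ᴴ := by
    rw [hSdef, conj_diag_mul]
    conv_rhs => rw [hMpsd.1.spectral_theorem, Unitary.conjStarAlgAut_apply]
    have hse : (Real.sqrt ∘ hMpsd.1.eigenvalues) * (Real.sqrt ∘ hMpsd.1.eigenvalues) =
        hMpsd.1.eigenvalues := by
      funext i
      exact Real.mul_self_sqrt (hMpsd.eigenvalues_nonneg i)
    rw [hse]
  have habs_eq : absC = S := by
    open scoped MatrixOrder in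
    exact ((CFC.sqrt_eq_iff _ _ hMpsd.nonneg habs_psd.nonneg).mpr
      (by rw [← pow_two]; exact hsq)).symm.trans
      ((CFC.sqrt_eq_iff _ _ hMpsd.nonneg hS_psd.nonneg).mpr hS2)
  have h1 : traceNorm C = RCLike.re S.trace := by
    rw [hSdef]
    rw [trace_conj_diag hMpsd.1.eigenvectorUnitary (Real.sqrt ∘ hMpsd.1.eigenvalues)]
    rw [traceNorm]
    simp
  have h2 : RCLike.re absC.trace = ∑ i, |hC.eigenvalues i| := by
    rw [habsdef, trace_conj_diag U (fun i => |hC.eigenvalues i|)]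
    simp
  rw [h1, ← habs_eq, h2]


lemma mirsky {A B : Matrix (Fin n) (Fin n) ℂ} (hA : A.IsHermitian) (hB : B.IsHermitian) :
    ∑ k, |sortedEigsDesc hA k - sortedEigsDesc hB k| ≤ ∑ i, |(hA.sub hB).eigenvalues i| := by
  have hC : (A - B).IsHermitian := hA.sub hB
  set lam := hC.eigenvalues with hlam
  set dpos : Fin n → ℝ := fun i => max (lam i) 0 with hdpos
  set dneg : Fin n → ℝ := fun i => max (-lam i) 0 with hdneg
  set U := hC.eigenvectorUnitary with hUdef
  set P := (U : Matrix (Fin n) (Fin n) ℂ) * Matrix.diagonal (RCLike.ofReal ∘ dpos) *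
      (star U : Matrix (Fin n) (Fin n) ℂ) with hPdef
  set N := (U : Matrix (Fin n) (Fin n) ℂ) * Matrix.diagonal (RCLike.ofReal ∘ dneg) *
      (star U : Matrix (Fin n) (Fin n) ℂ) with hNdef
  have hPpsd : P.PosSemidef := conj_diag_posSemidef hC fun i => le_max_right _ _
  have hNpsd : N.PosSemidef := conj_diag_posSemidef hC fun i => le_max_right _ _
  have hdiff : dpos - dneg = lam := by
    funext i
    simp only [Pi.sub_apply, hdpos, hdneg]
    rcases le_total (lam i) 0 with h | h
    · rw [max_eq_right h, max_eq_left (by linarith)]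
      ring
    · rw [max_eq_left h, max_eq_right (by linarith)]
      ring
  have hPN : P - N = A - B := by
    rw [hPdef, hNdef, ← Matrix.sub_mul, ← Matrix.mul_sub, Matrix.diagonal_sub]
    have hcast : (fun i => (RCLike.ofReal ∘ dpos : Fin n → ℂ) i -
        (RCLike.ofReal ∘ dneg : Fin n → ℂ) i) = RCLike.ofReal ∘ lam := by
      funext i
      simp only [Function.comp_apply, ← hdiff, Pi.sub_apply]
      push_cast
      ring
    rw [hcast]
    exact hC.spectral_theorem.symm
  have htrP : RCLike.re P.trace = ∑ i, dpos i := by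
    rw [hPdef, trace_conj_diag]
    simp
  have htrN : RCLike.re N.trace = ∑ i, dneg i := by
    rw [hNdef, trace_conj_diag]
    simp
  have hBP : (B + P).IsHermitian := hB.add hPpsd.1
  have hAN : (A + N).IsHermitian := hA.add hNpsd.1
  have hBPAN : A + N = B + P := by
    have h2 := sub_eq_sub_iff_add_eq_add.mp hPN
    rw [add_comm B P]
    exact h2.symm
  have hw1 : ∀ k, sortedEigsDesc hB k ≤ sortedEigsDesc hBP k := weyl_mono hB hPpsd hBP
  have hw2 : ∀ k, sortedEigsDesc hA k ≤ sortedEigsDesc hBP k := by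
    intro k
    have h3 := weyl_mono hA hNpsd hAN k
    rwa [sortedEigsDesc_congr hBPAN hAN hBP] at h3
  have hbound : ∀ k ∈ Finset.univ, |sortedEigsDesc hA k - sortedEigsDesc hB k| ≤
      (sortedEigsDesc hBP k - sortedEigsDesc hB k) +
        (sortedEigsDesc hBP k - sortedEigsDesc hA k) := by
    intro k _
    have h1 := hw1 k
    have h2 := hw2 k
    apply abs_le.mpr
    constructor <;> linarith
  have hmain := Finset.sum_le_sum hbound
  have hsplit : ∑ k, ((sortedEigsDesc hBP k - sortedEigsDesc hB k) +
      (sortedEigsDesc hBP k - sortedEigsDesc hA k)) =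
      ((∑ k, sortedEigsDesc hBP k) - ∑ k, sortedEigsDesc hB k) +
      ((∑ k, sortedEigsDesc hBP k) - ∑ k, sortedEigsDesc hA k) := by
    rw [Finset.sum_add_distrib, Finset.sum_sub_distrib, Finset.sum_sub_distrib]
  have hs1 : ∑ k, sortedEigsDesc hBP k = RCLike.re B.trace + RCLike.re P.trace := by
    rw [sum_sortedEigsDesc hBP, Matrix.trace_add, map_add]
  have hs2 : ∑ k, sortedEigsDesc hBP k = RCLike.re A.trace + RCLike.re N.trace := by
    rw [sum_sortedEigsDesc hBP, ← hBPAN, Matrix.trace_add, map_add]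
  have hsB := sum_sortedEigsDesc hB
  have hsA := sum_sortedEigsDesc hA
  have habs : ∑ i, dpos i + ∑ i, dneg i = ∑ i, |lam i| := by
    rw [← Finset.sum_add_distrib]
    apply Finset.sum_congr rfl
    intro i _
    simp only [hdpos, hdneg]
    rcases le_total (lam i) 0 with h | h
    · rw [max_eq_right h, max_eq_left (by linarith), abs_of_nonpos h]
      ring
    · rw [max_eq_left h, max_eq_right (by linarith), abs_of_nonneg h]
      ring
  calc ∑ k, |sortedEigsDesc hA k - sortedEigsDesc hB k|
      ≤ ∑ k, ((sortedEigsDesc hBP k - sortedEigsDesc hB k) +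
        (sortedEigsDesc hBP k - sortedEigsDesc hA k)) := hmain
    _ = ∑ i, |lam i| := by
        rw [hsplit, hsB, hsA]
        nth_rewrite 1 [hs1]
        nth_rewrite 1 [hs2]
        rw [htrP, htrN]
        linarith [habs]
    _ = ∑ i, |(hA.sub hB).eigenvalues i| := rfl

lemma log_lipschitz {Λ a b : ℝ} (hΛ : 0 < Λ) (ha : 1 / Λ ≤ a) (hb : 1 / Λ ≤ b) :
    |Real.log a - Real.log b| ≤ Λ * |a - b| := by
  have hΛinv : 0 < 1 / Λ := by positivity
  have key : ∀ x y : ℝ, 1 / Λ ≤ x → 1 / Λ ≤ y → y ≤ x →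
      Real.log x - Real.log y ≤ Λ * (x - y) := by
    intro x y hx hy hxy
    have hy0 : 0 < y := lt_of_lt_of_le hΛinv hy
    have hx0 : 0 < x := lt_of_lt_of_le hΛinv hx
    have h1 : Real.log x - Real.log y = Real.log (x / y) :=
      (Real.log_div (ne_of_gt hx0) (ne_of_gt hy0)).symm
    have h2 : Real.log (x / y) ≤ x / y - 1 := Real.log_le_sub_one_of_pos (by positivity)
    have h3 : x / y - 1 = (x - y) / y := by field_simp
    have hinv : 1 / y ≤ Λ := by
      rw [div_le_iff₀ hy0]
      have := (div_le_iff₀ hΛ).mp hy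
      linarith
    have h4 : (x - y) / y ≤ Λ * (x - y) := by
      calc (x - y) / y = (x - y) * (1 / y) := by ring
        _ ≤ (x - y) * Λ := mul_le_mul_of_nonneg_left hinv (by linarith)
        _ = Λ * (x - y) := mul_comm _ _
    linarith
  have ha0 : 0 < a := lt_of_lt_of_le hΛinv ha
  have hb0 : 0 < b := lt_of_lt_of_le hΛinv hb
  rcases le_total b a with h | h
  · rw [abs_of_nonneg (sub_nonneg.mpr (Real.log_le_log hb0 h)),
      abs_of_nonneg (sub_nonneg.mpr h)]
    exact key a b ha hb h
  · rw [abs_sub_comm (Real.log a), abs_sub_comm a b,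
      abs_of_nonneg (sub_nonneg.mpr (Real.log_le_log ha0 h)),
      abs_of_nonneg (sub_nonneg.mpr h)]
    exact key b a hb ha h

end MirskyAux

/-- **Cut-off entanglement spectra are close for close states**: if `ρ`, `σ` are
density matrices with `‖ρ - σ‖₁ ≤ ε` and `Λ > 0`, then comparing, at matching
positions of the decreasingly sorted spectra, the values `-log λ` over the
eigenvalues that are at least `1/Λ`, the `ℓ¹` distance is at most `Λ ε`
(by `Λ`-Lipschitz continuity of `-log` on `[1/Λ, ∞)`). -/
theorem cutoff_log_spectrum_close {n : ℕ} (ρ σ : Matrix (Fin n) (Fin n) ℂ)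
    (hρ : IsDensityMatrix ρ) (hσ : IsDensityMatrix σ)
    (hherm : ρ.IsHermitian) (hherm' : σ.IsHermitian)
    (ε Λ : ℝ) (hΛ : 0 < Λ) (hε : traceNorm (ρ - σ) ≤ ε) :
    ∑ i ∈ Finset.univ.filter
        (fun i => 1 / Λ ≤ sortedEigsDesc hherm i ∧ 1 / Λ ≤ sortedEigsDesc hherm' i),
      |(-Real.log (sortedEigsDesc hherm i)) - (-Real.log (sortedEigsDesc hherm' i))| ≤
      Λ * ε := by
  classical
  have hC : (ρ - σ).IsHermitian := hherm.sub hherm'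
  have hstep : ∀ i ∈ Finset.univ.filter
      (fun i => 1 / Λ ≤ sortedEigsDesc hherm i ∧ 1 / Λ ≤ sortedEigsDesc hherm' i),
      |(-Real.log (sortedEigsDesc hherm i)) - (-Real.log (sortedEigsDesc hherm' i))| ≤
        Λ * |sortedEigsDesc hherm i - sortedEigsDesc hherm' i| := by
    intro i hi
    rw [Finset.mem_filter] at hi
    have heq : (-Real.log (sortedEigsDesc hherm i)) - (-Real.log (sortedEigsDesc hherm' i)) =
        Real.log (sortedEigsDesc hherm' i) - Real.log (sortedEigsDesc hherm i) := by ring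
    rw [heq, abs_sub_comm (sortedEigsDesc hherm i)]
    exact MirskyAux.log_lipschitz hΛ hi.2.2 hi.2.1
  calc ∑ i ∈ Finset.univ.filter
        (fun i => 1 / Λ ≤ sortedEigsDesc hherm i ∧ 1 / Λ ≤ sortedEigsDesc hherm' i),
      |(-Real.log (sortedEigsDesc hherm i)) - (-Real.log (sortedEigsDesc hherm' i))|
      ≤ ∑ i ∈ Finset.univ.filter
        (fun i => 1 / Λ ≤ sortedEigsDesc hherm i ∧ 1 / Λ ≤ sortedEigsDesc hherm' i),
          Λ * |sortedEigsDesc hherm i - sortedEigsDesc hherm' i| := Finset.sum_le_sum hstep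
    _ ≤ ∑ i, Λ * |sortedEigsDesc hherm i - sortedEigsDesc hherm' i| :=
        Finset.sum_le_sum_of_subset_of_nonneg (Finset.filter_subset _ _)
          (fun i _ _ => by positivity)
    _ = Λ * ∑ i, |sortedEigsDesc hherm i - sortedEigsDesc hherm' i| :=
        (Finset.mul_sum _ _ _).symm
    _ ≤ Λ * ∑ i, |(hherm.sub hherm').eigenvalues i| :=
        mul_le_mul_of_nonneg_left (MirskyAux.mirsky hherm hherm') hΛ.le
    _ = Λ * traceNorm (ρ - σ) := by rw [MirskyAux.traceNorm_hermitian (hherm.sub hherm')]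
    _ ≤ Λ * ε := mul_le_mul_of_nonneg_left hε hΛ.le
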